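/- Let C and ℓ be integers with 2 ≤ ℓ < C, let Π ∈ (0,1], and let r_1, …, r_ℓ be nonnegative reals with Σ_{i=1}^{ℓ} r_i·Π ≤ 1. For 1 ≤ k ≤ ℓ define the top-k-aware Fano scaling function S_{F_k}(Π) = −Σ_{i=1}^{k} (r_i Π)·log₂(r_i Π) − (1 − Σ_{i=1}^{k} r_i Π)·log₂(1 − Σ_{i=1}^{k} r_i Π) + (1 − Σ_{i=1}^{k} r_i Π)·log₂(C − k), with the convention 0·log₂ 0 = 0. Then S_{F_ℓ}(Π) ≤ S_{F_{ℓ−1}}(Π): merging the ℓ-th candidate's probability mass r_ℓ Π into the uniformly distributed tail over C−ℓ+1 states can only increase the entropy. -/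

import Mathlib

lemma key_merge (a T M : ℝ) (ha : 0 ≤ a) (hT : 0 ≤ T) (hM : 1 ≤ M) :
    (a+T) * Real.log (a+T) - (a+T) * Real.log (1+M) ≤
      a * Real.log a + T * Real.log T - T * Real.log M := by
  have hM0 : (0:ℝ) < M := by linarith
  have h1M : (0:ℝ) < 1 + M := by linarith
  rcases eq_or_lt_of_le hT with h | hTpos
  · rw [← h]
    simp only [add_zero, zero_mul, sub_zero]
    have h1 : Real.log (1+M) ≥ 0 := Real.log_nonneg (by linarith)
    nlinarith [mul_nonneg ha h1]
  · have hw1 : (0:ℝ) ≤ 1/(1+M) := by positivity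
    have hw2 : (0:ℝ) ≤ M/(1+M) := by positivity
    have hws : 1/(1+M) + M/(1+M) = 1 := by field_simp
    have hTM : (0:ℝ) ≤ T/M := by positivity
    have hconv := Real.convexOn_mul_log.2 (Set.mem_Ici.2 ha) (Set.mem_Ici.2 hTM) hw1 hw2 hws
    simp only [smul_eq_mul] at hconv
    have hc : 1/(1+M) * a + M/(1+M) * (T/M) = (a+T)/(1+M) := by field_simp
    rw [hc] at hconv
    have haT : (0:ℝ) < a + T := by linarith
    have hlog1 : Real.log ((a+T)/(1+M)) = Real.log (a+T) - Real.log (1+M) :=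
      Real.log_div haT.ne' (ne_of_gt h1M)
    have hlog2 : Real.log (T/M) = Real.log T - Real.log M :=
      Real.log_div (ne_of_gt hTpos) (ne_of_gt hM0)
    rw [hlog1, hlog2] at hconv
    have h1 : (a+T)/(1+M) * (Real.log (a+T) - Real.log (1+M))
        = ((a+T) * Real.log (a+T) - (a+T) * Real.log (1+M)) / (1+M) := by ring
    have h2 : 1/(1+M) * (a * Real.log a) + M/(1+M) * (T/M * (Real.log T - Real.log M))
        = (a * Real.log a + T * Real.log T - T * Real.log M) / (1+M) := by
      field_simp
      ring
    rw [h1, h2, div_le_div_iff_of_pos_right h1M] at hconv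
    exact hconv

/-- The top-`k`-aware Fano scaling function
`S_{F_k}(Π) = -∑_{i=1}^k (rᵢΠ)·log₂(rᵢΠ) - (1-∑_{i=1}^k rᵢΠ)·log₂(1-∑_{i=1}^k rᵢΠ)
              + (1-∑_{i=1}^k rᵢΠ)·log₂(C-k)`
(with the convention `0·log₂ 0 = 0`, automatic since `Real.logb 2 0 = 0`). -/
noncomputable def SFk (C k : ℕ) (r : ℕ → ℝ) (P : ℝ) : ℝ :=
  -(∑ i ∈ Finset.Icc 1 k, r i * P * Real.logb 2 (r i * P))
    - (1 - ∑ i ∈ Finset.Icc 1 k, r i * P) * Real.logb 2 (1 - ∑ i ∈ Finset.Icc 1 k, r i * P)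
    + (1 - ∑ i ∈ Finset.Icc 1 k, r i * P) * Real.logb 2 ((C : ℝ) - (k : ℝ))

/-- For integers `2 ≤ ℓ < C`, `Π ∈ (0,1]` and nonnegative ratios `rᵢ` with
`∑_{i=1}^ℓ rᵢ·Π ≤ 1`, we have `S_{F_ℓ}(Π) ≤ S_{F_{ℓ-1}}(Π)`: merging the `ℓ`-th candidate's
probability mass into the uniformly distributed tail can only increase the entropy. -/
theorem stmt_10 (C ℓ : ℕ) (hℓ : 2 ≤ ℓ) (hℓC : ℓ < C)
    (P : ℝ) (hP0 : 0 < P) (hP1 : P ≤ 1)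
    (r : ℕ → ℝ) (hr : ∀ i, 0 ≤ r i)
    (hsum : ∑ i ∈ Finset.Icc 1 ℓ, r i * P ≤ 1) :
    SFk C ℓ r P ≤ SFk C (ℓ - 1) r P := by
  obtain ⟨n, rfl⟩ : ∃ n, ℓ = n + 1 := ⟨ℓ - 1, by omega⟩
  have hsplit : ∑ i ∈ Finset.Icc 1 (n+1), r i * P
      = (∑ i ∈ Finset.Icc 1 n, r i * P) + r (n+1) * P :=
    Finset.sum_Icc_succ_top (by omega) _
  have hsplit2 : ∑ i ∈ Finset.Icc 1 (n+1), r i * P * Real.logb 2 (r i * P)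
      = (∑ i ∈ Finset.Icc 1 n, r i * P * Real.logb 2 (r i * P))
        + r (n+1) * P * Real.logb 2 (r (n+1) * P) :=
    Finset.sum_Icc_succ_top (by omega) _
  set a := r (n+1) * P with hadef
  set s := ∑ i ∈ Finset.Icc 1 n, r i * P with hsdef
  have ha : 0 ≤ a := mul_nonneg (hr _) hP0.le
  set T := 1 - s - a with hTdef
  have hT : 0 ≤ T := by rw [hTdef]; rw [hsplit] at hsum; linarith
  set M := (C : ℝ) - ((n:ℝ) + 1) with hMdef
  have hM : 1 ≤ M := by
    rw [hMdef]
    have : (n:ℝ) + 2 ≤ (C:ℝ) := by exact_mod_cast Nat.succ_le_of_lt hℓC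
    linarith
  have hkey := key_merge a T M ha hT hM
  have hlog2pos : (0:ℝ) < Real.log 2 := Real.log_pos one_lt_two
  unfold SFk
  simp only [Nat.add_sub_cancel, hsplit, hsplit2, Nat.cast_add, Nat.cast_one]
  have h1s : 1 - (s + a) = T := by rw [hTdef]; ring
  have h1s' : 1 - s = a + T := by rw [hTdef]; ring
  have hCn1 : (C:ℝ) - ((n:ℝ) + 1) = M := rfl
  have hCn : (C:ℝ) - (n:ℝ) = 1 + M := by rw [hMdef]; ring
  rw [h1s, h1s', hCn1, hCn]
  simp only [Real.logb]
  have heq1 : -(∑ i ∈ Finset.Icc 1 n, r i * P * (Real.log (r i * P) / Real.log 2)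
        + a * (Real.log a / Real.log 2))
      - T * (Real.log T / Real.log 2) + T * (Real.log M / Real.log 2)
      = -(∑ i ∈ Finset.Icc 1 n, r i * P * (Real.log (r i * P) / Real.log 2))
        + (-(a * Real.log a) - T * Real.log T + T * Real.log M) / Real.log 2 := by ring
  have heq2 : -(∑ i ∈ Finset.Icc 1 n, r i * P * (Real.log (r i * P) / Real.log 2))
      - (a + T) * (Real.log (a + T) / Real.log 2) + (a + T) * (Real.log (1 + M) / Real.log 2)
      = -(∑ i ∈ Finset.Icc 1 n, r i * P * (Real.log (r i * P) / Real.log 2))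
        + (-((a + T) * Real.log (a + T)) + (a + T) * Real.log (1 + M)) / Real.log 2 := by ring
  rw [heq1, heq2]
  refine add_le_add le_rfl ?_
  rw [div_le_div_iff_of_pos_right hlog2pos]
  linarith
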